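/- If a permutation contains the classical pattern 23451 (i.e., indices i₁<i₂<i₃<i₄<i₅ with π(i₅)<π(i₁)<π(i₂)<π(i₃)<π(i₄)), then S(π) contains the classical pattern 2341, and hence π is not West-3-stack-sortable: S³(π) ≠ id. -/

import Mathlib

/-- Pop from the stack (top first) all letters smaller than `x`;
returns (popped output, remaining stack). -/
def stackPop (x : ℕ) : List ℕ → List ℕ × List ℕ
  | [] => ([], [])
  | t :: ts =>
    if t < x then
      let p := stackPop x ts
      (t :: p.1, p.2)
    else ([], t :: ts)

/-- Run the stack-sorting procedure with the given stack and input;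
at the end the (increasing) stack is flushed to the output. -/
def stackRun : List ℕ → List ℕ → List ℕ
  | stack, [] => stack
  | stack, x :: xs =>
    let p := stackPop x stack
    p.1 ++ stackRun (x :: p.2) xs

/-- The stack-sort operator: one pass of a permutation (word) through a stack. -/
def S (w : List ℕ) : List ℕ := stackRun [] w

/-- `w` is (the one-line notation of) a permutation of `{1, …, n}`. -/
def IsPermOf (w : List ℕ) (n : ℕ) : Prop := w.Perm (List.range' 1 n)

/-- The identity permutation `1 2 ⋯ n` in one-line notation. -/
def idPerm (n : ℕ) : List ℕ := List.range' 1 n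

/-- `w` contains the classical pattern 23451. -/
def Contains23451 (w : List ℕ) : Prop :=
  ∃ i1 i2 i3 i4 i5 : Fin w.length, i1 < i2 ∧ i2 < i3 ∧ i3 < i4 ∧ i4 < i5 ∧
    w.get i5 < w.get i1 ∧ w.get i1 < w.get i2 ∧ w.get i2 < w.get i3 ∧
    w.get i3 < w.get i4

/-- `w` contains the classical pattern 2341. -/
def Contains2341 (w : List ℕ) : Prop :=
  ∃ i j k l : Fin w.length, i < j ∧ j < k ∧ k < l ∧
    w.get l < w.get i ∧ w.get i < w.get j ∧ w.get j < w.get k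

open List

lemma stackPop_eq (x : ℕ) (st : List ℕ) :
    stackPop x st = (st.takeWhile (· < x), st.dropWhile (· < x)) := by
  induction st with
  | nil => rfl
  | cons t ts ih =>
    by_cases h : t < x
    · simp [stackPop, h, ih, List.takeWhile_cons, List.dropWhile_cons]
    · simp [stackPop, h, List.takeWhile_cons, List.dropWhile_cons]

lemma stackRun_nil (st : List ℕ) : stackRun st [] = st := rfl

lemma stackRun_cons (st : List ℕ) (a : ℕ) (xs : List ℕ) :
    stackRun st (a :: xs) =
      st.takeWhile (· < a) ++ stackRun (a :: st.dropWhile (· < a)) xs := by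
  simp [stackRun, stackPop_eq]

lemma stackRun_perm (xs : List ℕ) : ∀ st : List ℕ, (stackRun st xs).Perm (st ++ xs) := by
  induction xs with
  | nil => intro st; simp [stackRun_nil]
  | cons a xs ih =>
    intro st
    rw [stackRun_cons]
    refine (List.Perm.append_left _ (ih _)).trans ?_
    conv_rhs => rw [← List.takeWhile_append_dropWhile (p := (· < a)) (l := st)]
    simp only [List.append_assoc, List.cons_append]
    exact List.Perm.append_left _ List.perm_middle.symm

lemma mem_stackRun_of_mem_stack {e : ℕ} {st xs : List ℕ} (h : e ∈ st) :
    e ∈ stackRun st xs :=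
  ((stackRun_perm xs st).mem_iff).2 (List.mem_append.2 (Or.inl h))

lemma mem_stackRun_of_mem_input {e : ℕ} {st xs : List ℕ} (h : e ∈ xs) :
    e ∈ stackRun st xs :=
  ((stackRun_perm xs st).mem_iff).2 (List.mem_append.2 (Or.inr h))

lemma le_of_mem_dropWhile {a e : ℕ} {st : List ℕ} (hs : st.Pairwise (· ≤ ·))
    (h : e ∈ st.dropWhile (· < a)) : a ≤ e := by
  induction st with
  | nil => simp at h
  | cons b t ih =>
    rw [List.dropWhile_cons] at h
    by_cases hb : b < a
    · simp only [hb, if_pos, decide_eq_true hb] at h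
      exact ih hs.of_cons h
    · simp only [hb, decide_eq_false hb, if_neg, Bool.false_eq_true, if_false] at h
      rcases List.mem_cons.1 h with rfl | he
      · omega
      · exact le_trans (by omega) (List.rel_of_pairwise_cons hs he)

lemma sorted_push {a : ℕ} {st : List ℕ} (hs : st.Pairwise (· ≤ ·)) :
    (a :: st.dropWhile (· < a)).Pairwise (· ≤ ·) := by
  refine List.pairwise_cons.2 ⟨fun e he => le_of_mem_dropWhile hs he, ?_⟩
  exact hs.sublist (List.dropWhile_sublist _)

lemma mem_takeWhile_of_lt {x a : ℕ} {st : List ℕ} (hs : st.Pairwise (· ≤ ·))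
    (hx : x ∈ st) (hxa : x < a) : x ∈ st.takeWhile (· < a) := by
  have := List.takeWhile_append_dropWhile (p := (· < a)) (l := st)
  rw [← this] at hx
  rcases List.mem_append.1 hx with h | h
  · exact h
  · exact absurd (le_of_mem_dropWhile hs h) (by omega)

lemma mem_drop_of_not_lt {x a : ℕ} {st : List ℕ}
    (hx : x ∈ st) (hxa : ¬ x < a) : x ∈ st.dropWhile (· < a) := by
  have := List.takeWhile_append_dropWhile (p := (· < a)) (l := st)
  rw [← this] at hx
  rcases List.mem_append.1 hx with h | h
  · exact absurd (by simpa using List.mem_takeWhile_imp h) hxa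
  · exact h

-- K0 : element on stack smaller than upcoming y comes out before y
lemma K0 {x y : ℕ} (xs : List ℕ) : ∀ st : List ℕ, st.Pairwise (· ≤ ·) → x ∈ st →
    x < y → y ∈ xs → [x, y] <+ stackRun st xs := by
  induction xs with
  | nil => intro st _ _ _ hy; simp at hy
  | cons a rest ih =>
    intro st hs hx hxy hy
    rw [stackRun_cons]
    by_cases hxa : x < a
    · have h1 : [x] <+ st.takeWhile (· < a) :=
        List.singleton_sublist.2 (mem_takeWhile_of_lt hs hx hxa)
      have h2 : [y] <+ stackRun (a :: st.dropWhile (· < a)) rest := by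
        rcases List.mem_cons.1 hy with rfl | hy'
        · exact List.singleton_sublist.2 (mem_stackRun_of_mem_stack (List.mem_cons_self))
        · exact List.singleton_sublist.2 (mem_stackRun_of_mem_input hy')
      exact h1.append h2
    · have hya : y ∈ rest := by
        rcases List.mem_cons.1 hy with rfl | hy' <;> [omega; exact hy']
      refine List.sublist_append_of_sublist_right ?_
      exact ih _ (sorted_push hs) (List.mem_cons.2 (Or.inr (mem_drop_of_not_lt hx hxa))) hxy hya

-- K0'' : element on stack, smaller than upcoming z, comes out before any y after z
lemma K0' {x z y : ℕ} (xs : List ℕ) : ∀ st : List ℕ, st.Pairwise (· ≤ ·) → x ∈ st →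
    x < z → [z, y] <+ xs → [x, y] <+ stackRun st xs := by
  induction xs with
  | nil => intro st _ _ _ hzy; simp at hzy
  | cons a rest ih =>
    intro st hs hx hxz hzy
    rw [stackRun_cons]
    cases hzy with
    | cons _ h =>
      by_cases hxa : x < a
      · have h1 : [x] <+ st.takeWhile (· < a) :=
          List.singleton_sublist.2 (mem_takeWhile_of_lt hs hx hxa)
        have hy : y ∈ rest := h.subset (by simp)
        exact h1.append (List.singleton_sublist.2 (mem_stackRun_of_mem_input hy))
      · refine List.sublist_append_of_sublist_right ?_
        exact ih _ (sorted_push hs) (List.mem_cons.2 (Or.inr (mem_drop_of_not_lt hx hxa))) hxz h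
    | cons_cons _ h =>
      have h1 : [x] <+ st.takeWhile (· < z) :=
        List.singleton_sublist.2 (mem_takeWhile_of_lt hs hx hxz)
      have hy : y ∈ rest := h.subset (by simp)
      exact h1.append (List.singleton_sublist.2 (mem_stackRun_of_mem_input hy))

lemma K1 {x y : ℕ} (xs : List ℕ) : ∀ st : List ℕ, st.Pairwise (· ≤ ·) →
    [x, y] <+ xs → x < y → [x, y] <+ stackRun st xs := by
  induction xs with
  | nil => intro st _ hsub _; simp at hsub
  | cons a rest ih =>
    intro st hs hsub hxy
    rw [stackRun_cons]
    cases hsub with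
    | cons _ h =>
      exact List.sublist_append_of_sublist_right (ih _ (sorted_push hs) h hxy)
    | cons_cons _ h =>
      refine List.sublist_append_of_sublist_right ?_
      exact K0 rest _ (sorted_push hs) (List.mem_cons_self) hxy (h.subset (by simp))

lemma K2 {x z y : ℕ} (xs : List ℕ) : ∀ st : List ℕ, st.Pairwise (· ≤ ·) →
    [x, z, y] <+ xs → x < z → [x, y] <+ stackRun st xs := by
  induction xs with
  | nil => intro st _ hsub _; simp at hsub
  | cons a rest ih =>
    intro st hs hsub hxz
    rw [stackRun_cons]
    cases hsub with
    | cons _ h =>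
      exact List.sublist_append_of_sublist_right (ih _ (sorted_push hs) h hxz)
    | cons_cons _ h =>
      refine List.sublist_append_of_sublist_right ?_
      exact K0' rest _ (sorted_push hs) (List.mem_cons_self) hxz h

lemma sublist_glue : ∀ (l : List ℕ), l.Nodup → ∀ (u v : List ℕ) (m : ℕ),
    (u ++ [m]) <+ l → (m :: v) <+ l → (u ++ m :: v) <+ l := by
  intro l
  induction l with
  | nil => intro _ u v m h1 _; simp at h1
  | cons h t ih =>
    intro nd u v m h1 h2
    cases u with
    | nil => simpa using h2
    | cons x u' =>
      rw [List.cons_append] at h1 ⊢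
      cases h1 with
      | cons _ hh =>
        have hm : m ∈ t := hh.subset (by simp)
        have hmh : m ≠ h := fun e => (List.nodup_cons.1 nd).1 (e ▸ hm)
        have h2' : m :: v <+ t := by
          cases h2 with
          | cons _ hx => exact hx
          | cons_cons _ hx => exact absurd hm (List.nodup_cons.1 nd).1
        exact (ih (List.nodup_cons.1 nd).2 (x :: u') v m hh h2').cons h
      | cons_cons _ hh =>
        have hm : m ∈ t := hh.subset (by simp)
        have h2' : m :: v <+ t := by
          cases h2 with
          | cons _ hx => exact hx
          | cons_cons _ hx => exact absurd hm (List.nodup_cons.1 nd).1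
        exact (ih (List.nodup_cons.1 nd).2 u' v m hh h2').cons₂ _

lemma S_perm (w : List ℕ) : (S w).Perm w := by
  simpa [S] using stackRun_perm w []

lemma S_nodup {w : List ℕ} (h : w.Nodup) : (S w).Nodup :=
  ((S_perm w).nodup_iff).2 h

/-- if `π` contains 23451 then `S(π)` contains 2341, and hence
`π` is not West-3-stack-sortable. -/
theorem contains23451_not_west3 (n : ℕ) (w : List ℕ) (hw : IsPermOf w n)
    (h : Contains23451 w) :
    Contains2341 (S w) ∧ S (S (S w)) ≠ idPerm n := by
  obtain ⟨i1, i2, i3, i4, i5, h12, h23, h34, h45, he, hab, hbc, hcd⟩ := h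
  have hndw : w.Nodup := (hw.nodup_iff).2 (List.nodup_range' (s := 1) (n := n))
  set a := w.get i1 with ha
  set b := w.get i2 with hb
  set c := w.get i3 with hc
  set d := w.get i4 with hd
  set e := w.get i5 with heq
  -- the five entries form a sublist of w
  have hpw : List.Pairwise (· < ·) [i1, i2, i3, i4, i5] := by
    simp only [List.pairwise_cons, List.mem_cons, List.not_mem_nil, List.mem_singleton,
      or_false, Fin.lt_def] at *
    refine ⟨?_, ?_, ?_, ?_, fun _ h => h.elim, List.Pairwise.nil⟩ <;>
      rintro b (rfl | rfl | rfl | rfl) <;> omega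
  have hP : [a, b, c, d, e] <+ w := by
    have := List.map_getElem_sublist (l := w) (is := [i1, i2, i3, i4, i5]) hpw
    simpa [ha, hb, hc, hd, heq, List.get_eq_getElem] using this
  -- pieces inside w
  have hab_w : [a, b] <+ w :=
    (((((List.nil_sublist [c, d, e]).cons₂ b).cons₂ a)).trans hP)
  have hbc_w : [b, c] <+ w := by
    refine List.Sublist.trans ?_ hP
    exact (((List.nil_sublist [d, e]).cons₂ c).cons₂ b).cons a
  have hcde_w : [c, d, e] <+ w := by
    refine List.Sublist.trans ?_ hP
    exact ((List.Sublist.refl [c, d, e]).cons b).cons a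
  have hnil : ([] : List ℕ).Pairwise (· ≤ ·) := List.Pairwise.nil
  -- inside S w
  have hab1 : [a, b] <+ S w := K1 w [] hnil hab_w hab
  have hbc1 : [b, c] <+ S w := K1 w [] hnil hbc_w hbc
  have hce1 : [c, e] <+ S w := K2 w [] hnil hcde_w hcd
  have hnd1 : (S w).Nodup := S_nodup hndw
  have hbce : [b, c, e] <+ S w := sublist_glue _ hnd1 [b] [e] c hbc1 hce1
  have habce : [a, b, c, e] <+ S w := sublist_glue _ hnd1 [a] [c, e] b hab1 hbce
  constructor
  · -- Contains2341 (S w)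
    obtain ⟨is, his, hpis⟩ := List.sublist_eq_map_getElem habce
    rcases is with _ | ⟨j1, _ | ⟨j2, _ | ⟨j3, _ | ⟨j4, rest⟩⟩⟩⟩
    · simp at his
    · simp at his
    · simp at his
    · simp at his
    · simp only [List.map_cons, List.cons.injEq] at his
      obtain ⟨e1, e2, e3, e4, -⟩ := his
      simp only [Fin.getElem_fin] at e1 e2 e3 e4
      have p12 : j1 < j2 := List.rel_of_pairwise_cons hpis (by simp)
      have p23 : j2 < j3 := List.rel_of_pairwise_cons hpis.of_cons (by simp)
      have p34 : j3 < j4 := List.rel_of_pairwise_cons hpis.of_cons.of_cons (by simp)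
      refine ⟨j1, j2, j3, j4, p12, p23, p34, ?_, ?_, ?_⟩ <;>
        simp only [List.get_eq_getElem]
      · rw [← e1, ← e4]; exact he
      · rw [← e1, ← e2]; exact hab
      · rw [← e2, ← e3]; exact hbc
  · -- not 3-stack-sortable
    have hab2 : [a, b] <+ S (S w) := K1 _ [] hnil hab1 hab
    have hbe2 : [b, e] <+ S (S w) := K2 _ [] hnil hbce hbc
    have hnd2 : (S (S w)).Nodup := S_nodup hnd1
    have habe : [a, b, e] <+ S (S w) := sublist_glue _ hnd2 [a] [e] b hab2 hbe2
    have hae3 : [a, e] <+ S (S (S w)) := K2 _ [] hnil habe hab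
    intro hid
    rw [hid] at hae3
    have hlt : List.Pairwise (· < ·) (idPerm n) := by
      simpa [idPerm] using List.pairwise_lt_range' (s := 1) (n := n) 1
    have : a < e := by
      have := hlt.sublist hae3
      exact List.rel_of_pairwise_cons this (by simp)
    omega
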